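/- Let B be a nonempty countable set of pairwise Turing-incomparable Turing degrees. Then there exist equivalence relations R and S on ℕ such that Spec⇒(R,S) = {d : ∃ b ∈ B, b ≤ d}; that is, every upward closed collection of Turing degrees with a countable basis is realised as a reducibility spectrum. -/

import Mathlib

/-- `RecursiveInO O f` means the partial function `f` is partial recursive in the
(total) oracle `O`. -/
inductive RecursiveInO (O : ℕ → ℕ) : (ℕ →. ℕ) → Prop
  | zero : RecursiveInO O (pure 0)
  | succ : RecursiveInO O Nat.succ
  | left : RecursiveInO O ↑fun n : ℕ => n.unpair.1
  | right : RecursiveInO O ↑fun n : ℕ => n.unpair.2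
  | oracle : RecursiveInO O ↑O
  | pair {f g} : RecursiveInO O f → RecursiveInO O g →
      RecursiveInO O fun n => Nat.pair <$> f n <*> g n
  | comp {f g} : RecursiveInO O f → RecursiveInO O g →
      RecursiveInO O fun n => g n >>= f
  | prec {f g} : RecursiveInO O f → RecursiveInO O g →
      RecursiveInO O (Nat.unpaired fun a n =>
        n.rec (f a) fun y IH => do let i ← IH; g (Nat.pair a (Nat.pair y i)))
  | rfind {f} : RecursiveInO O f →
      RecursiveInO O fun a => Nat.rfind fun n => (fun m => m = 0) <$> f (Nat.pair a n)

/-- Turing reducibility between total functions on `ℕ`. -/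
def TuringReducibleF (f g : ℕ → ℕ) : Prop := RecursiveInO g ↑f

/-- Turing equivalence of total functions on `ℕ`. -/
def TuringEquivalentF (f g : ℕ → ℕ) : Prop := TuringReducibleF f g ∧ TuringReducibleF g f

theorem TuringReducibleF.refl (f : ℕ → ℕ) : TuringReducibleF f f := RecursiveInO.oracle

theorem RecursiveInO.trans' {f : ℕ →. ℕ} {g h : ℕ → ℕ}
    (hf : RecursiveInO g f) (hg : TuringReducibleF g h) : RecursiveInO h f := by
  induction hf with
  | zero => exact .zero
  | succ => exact .succ
  | left => exact .left
  | right => exact .right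
  | oracle => exact hg
  | pair _ _ ih₁ ih₂ => exact .pair ih₁ ih₂
  | comp _ _ ih₁ ih₂ => exact .comp ih₁ ih₂
  | prec _ _ ih₁ ih₂ => exact .prec ih₁ ih₂
  | rfind _ ih => exact .rfind ih

theorem TuringReducibleF.trans {f g h : ℕ → ℕ}
    (h₁ : TuringReducibleF f g) (h₂ : TuringReducibleF g h) : TuringReducibleF f h :=
  RecursiveInO.trans' h₁ h₂

/-- The setoid of Turing equivalence. -/
def turingSetoid : Setoid (ℕ → ℕ) :=
  ⟨TuringEquivalentF,
    fun f => ⟨.refl f, .refl f⟩,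
    fun ⟨h₁, h₂⟩ => ⟨h₂, h₁⟩,
    fun ⟨a₁, a₂⟩ ⟨b₁, b₂⟩ => ⟨a₁.trans b₁, b₂.trans a₂⟩⟩

/-- Turing degrees. -/
def TuringDegreeF : Type := Quotient turingSetoid

/-- The Turing degree of a total function. -/
def TuringDegreeF.deg (f : ℕ → ℕ) : TuringDegreeF := Quotient.mk turingSetoid f

instance : LE TuringDegreeF :=
  ⟨fun d₁ d₂ =>
    Quotient.liftOn₂ d₁ d₂ TuringReducibleF
      (fun _ _ _ _ h h' =>
        propext ⟨fun hr => (h.2.trans hr).trans h'.1, fun hr => (h.1.trans hr).trans h'.2⟩)⟩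

instance : LT TuringDegreeF := ⟨fun d₁ d₂ => d₁ ≤ d₂ ∧ ¬d₂ ≤ d₁⟩

/-- The least Turing degree. -/
def TuringDegreeF.zero : TuringDegreeF := TuringDegreeF.deg fun _ => 0

/-- A partial function is computable in a Turing degree if it is recursive in some
(equivalently, any) representative of that degree. -/
def TuringDegreeF.ComputableIn (d : TuringDegreeF) (f : ℕ →. ℕ) : Prop :=
  Quotient.liftOn d (fun g => RecursiveInO g f)
    (fun _ _ h => propext ⟨fun hr => hr.trans' h.1, fun hr => hr.trans' h.2⟩)

open Classical in
/-- The characteristic function of a set of naturals. -/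
noncomputable def charFun (A : Set ℕ) : ℕ → ℕ := fun n => if n ∈ A then 1 else 0

/-- Turing reducibility between sets of naturals. -/
noncomputable def SetTuringReducible (A B : Set ℕ) : Prop :=
  TuringReducibleF (charFun A) (charFun B)

/-- The Turing degree of a set of naturals. -/
noncomputable def TuringDegreeF.degSet (A : Set ℕ) : TuringDegreeF :=
  TuringDegreeF.deg (charFun A)

/-- `R` is `d`-computably reducible to `S`. -/
def ReducibleIn (d : TuringDegreeF) (R S : ℕ → ℕ → Prop) : Prop :=
  ∃ f : ℕ → ℕ, d.ComputableIn ↑f ∧ ∀ x y, R x y ↔ S (f x) (f y)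

/-- The reducibility spectrum of the pair `(R, S)`. -/
def SpecRed (R S : ℕ → ℕ → Prop) : Set TuringDegreeF := {d | ReducibleIn d R S}

/-- The bi-reducibility spectrum of the pair `(R, S)`. -/
def SpecBired (R S : ℕ → ℕ → Prop) : Set TuringDegreeF :=
  {d | ReducibleIn d R S ∧ ReducibleIn d S R}

/-- The equivalence relation generated by a set `A`: two numbers are equivalent
iff they are equal or both belong to `A`. -/
def genRel (A : Set ℕ) : ℕ → ℕ → Prop := fun x y => x = y ∨ (x ∈ A ∧ y ∈ A)

/-- A ceer: an equivalence relation whose set of pairs is computably enumerable. -/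
def Ceer (R : ℕ → ℕ → Prop) : Prop :=
  Equivalence R ∧ REPred fun p : ℕ × ℕ => R p.1 p.2

/-- A computably enumerable set of naturals. -/
def CePred (A : Set ℕ) : Prop := REPred (· ∈ A)

/-- A partial transversal of `R`: a set any two distinct elements of which are
`R`-inequivalent. -/
def PartialTransversal (R : ℕ → ℕ → Prop) (A : Set ℕ) : Prop :=
  ∀ x ∈ A, ∀ y ∈ A, x ≠ y → ¬R x y

/-- An introreducible set: an infinite set computable from each of its infinite subsets. -/
def Introreducible (B : Set ℕ) : Prop :=
  B.Infinite ∧ ∀ C : Set ℕ, C ⊆ B → C.Infinite → SetTuringReducible B C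

section Stmt6Aux
variable {O : ℕ → ℕ}

theorem recursiveIn_of_partrec {f : ℕ →. ℕ} (h : Nat.Partrec f) : RecursiveInO O f := by
  induction h with
  | zero => exact .zero
  | succ => exact .succ
  | left => exact .left
  | right => exact .right
  | pair _ _ ih₁ ih₂ => exact .pair ih₁ ih₂
  | comp _ _ ih₁ ih₂ => exact .comp ih₁ ih₂
  | prec _ _ ih₁ ih₂ => exact .prec ih₁ ih₂
  | rfind _ ih => exact .rfind ih

theorem RecursiveInO.of_eq' {f g : ℕ →. ℕ} (hf : RecursiveInO O f) (H : ∀ n, f n = g n) :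
    RecursiveInO O g := (funext H : f = g) ▸ hf

theorem recIn_of_computable {f : ℕ → ℕ} (h : Computable f) : RecursiveInO O ↑f := by
  refine recursiveIn_of_partrec ?_
  exact Partrec.nat_iff.1 h

theorem RecursiveInO.totComp {f g : ℕ → ℕ} (hf : RecursiveInO O ↑f) (hg : RecursiveInO O ↑g) :
    RecursiveInO O ↑(fun n => f (g n)) := by
  refine (RecursiveInO.comp hf hg).of_eq' fun n => ?_
  simp [PFun.coe_val, Part.bind_eq_bind]
  exact Part.bind_some _ _

theorem RecursiveInO.totPair {f g : ℕ → ℕ} (hf : RecursiveInO O ↑f) (hg : RecursiveInO O ↑g) :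
    RecursiveInO O ↑(fun n => Nat.pair (f n) (g n)) := by
  refine (RecursiveInO.pair hf hg).of_eq' fun n => ?_
  simp [PFun.coe_val, Seq.seq]

end Stmt6Aux
section Stmt6Aux2
variable {O : ℕ → ℕ}

/-- iterated prefix coding: `preSeq g n` codes `(g 0, ..., g n)`. -/
def preSeq (g : ℕ → ℕ) : ℕ → ℕ
  | 0 => g 0
  | n+1 => Nat.pair (preSeq g n) (g (n+1))

theorem RecursiveInO.preSeq' {g : ℕ → ℕ} (hg : RecursiveInO O ↑g) :
    RecursiveInO O ↑(preSeq g) := by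
  have hG : RecursiveInO O ↑(fun z : ℕ =>
      Nat.pair z.unpair.2.unpair.2 (g (z.unpair.2.unpair.1 + 1))) := by
    refine RecursiveInO.totPair (recIn_of_computable ?_) (hg.totComp (recIn_of_computable ?_))
    · exact (Primrec.snd.comp <| Primrec.unpair.comp <|
        Primrec.snd.comp Primrec.unpair).to_comp
    · exact (Primrec.succ.comp <| Primrec.fst.comp <| Primrec.unpair.comp <|
        Primrec.snd.comp Primrec.unpair).to_comp
  have hF : RecursiveInO O ↑(fun _ : ℕ => g 0) := recIn_of_computable (Computable.const _)
  have hP := RecursiveInO.prec hF hG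
  have hpair0 : RecursiveInO O ↑(fun n : ℕ => Nat.pair 0 n) :=
    recIn_of_computable ((Primrec₂.natPair.comp (Primrec.const 0) Primrec.id).to_comp)
  refine (RecursiveInO.comp hP hpair0).of_eq' fun n => ?_
  simp only [PFun.coe_val, Part.bind_eq_bind, Part.bind_some, Nat.unpaired, Nat.unpair_pair]
  induction n with
  | zero => simp [preSeq]
  | succ n ih =>
    show (Nat.rec _ _ n : Part ℕ) >>= _ = _
    rw [ih]
    simp [preSeq, PFun.coe_val]

theorem RecursiveInO.search {t : ℕ → ℕ} (ht : RecursiveInO O ↑t)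
    (hex : ∀ a, ∃ k, t (Nat.pair a k) = 0) :
    RecursiveInO O ↑(fun a => Nat.find (hex a)) := by
  refine (RecursiveInO.rfind ht).of_eq' fun a => ?_
  show Nat.rfind _ = Part.some (Nat.find (hex a))
  refine Part.eq_some_iff.2 (Nat.mem_rfind.2 ⟨?_, ?_⟩)
  · simp [PFun.coe_val, Nat.find_spec (hex a)]
  · intro m hm
    simp only [PFun.coe_val, Part.map_some, Part.mem_some_iff]
    simpa using Nat.find_min (hex a) hm

end Stmt6Aux2
section Stmt6Aux3
variable {O : ℕ → ℕ}

def u1iter (t c : ℕ) : ℕ := (fun x => (Nat.unpair x).1)^[t] c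

def extractAt (m n c : ℕ) : ℕ :=
  if m = 0 then u1iter n c else (Nat.unpair (u1iter (n - m) c)).2

theorem u1iter_preSeq (g : ℕ → ℕ) (m k : ℕ) : u1iter k (preSeq g (m + k)) = preSeq g m := by
  induction k with
  | zero => rfl
  | succ k ih =>
    have : preSeq g (m + (k+1)) = Nat.pair (preSeq g (m+k)) (g (m+k+1)) := rfl
    rw [u1iter, Function.iterate_succ_apply, this]
    simpa [u1iter] using ih

theorem extractAt_preSeq (g : ℕ → ℕ) {m n : ℕ} (h : m ≤ n) :
    extractAt m n (preSeq g n) = g m := by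
  rcases m with _ | m
  · simp only [extractAt, if_pos rfl]
    have := u1iter_preSeq g 0 n
    simpa [preSeq] using this
  · have h1 : (m+1) + (n - (m+1)) = n := by omega
    have e := u1iter_preSeq g (m+1) (n - (m+1))
    rw [h1] at e
    simp only [extractAt, if_neg (Nat.succ_ne_zero m), e]
    show (Nat.unpair (Nat.pair (preSeq g m) (g (m+1)))).2 = g (m+1)
    simp

theorem primrec_u1iter : Primrec fun p : ℕ × ℕ => u1iter p.1 p.2 :=
  Primrec.nat_iterate Primrec.fst Primrec.snd
    ((Primrec.fst.comp Primrec.unpair).comp Primrec.snd).to₂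

theorem primrec_extractAt : Primrec fun p : ℕ × ℕ × ℕ => extractAt p.1 p.2.1 p.2.2 := by
  unfold extractAt
  apply Primrec.ite
  · exact PrimrecRel.comp Primrec.eq Primrec.fst (Primrec.const 0)
  · exact primrec_u1iter.comp (Primrec.pair (Primrec.fst.comp Primrec.snd)
      (Primrec.snd.comp Primrec.snd))
  · exact (Primrec.snd.comp Primrec.unpair).comp <| primrec_u1iter.comp <| Primrec.pair
      (Primrec.nat_sub.comp (Primrec.fst.comp Primrec.snd) Primrec.fst)
      (Primrec.snd.comp Primrec.snd)

end Stmt6Aux3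
section Stmt6Main
variable {O : ℕ → ℕ}

/-- the marked functions: `ghat G i x` carries `G i x` together with the chunk
`preSeq (G 0) i` coding the first `i+1` values of `G 0`. -/
def ghat (G : ℕ → ℕ → ℕ) (i : ℕ) : ℕ → ℕ := fun x => Nat.pair (G i x) (preSeq (G 0) i)

/-- valid certificates -/
def cert (G : ℕ → ℕ → ℕ) (i n : ℕ) : ℕ := Nat.pair i (Nat.pair n (preSeq (ghat G i) n))

def VS (G : ℕ → ℕ → ℕ) : Set ℕ := {v | ∃ i n, v = cert G i n}

theorem equivalence_genRel (A : Set ℕ) : Equivalence (genRel A) := by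
  constructor
  · exact fun x => Or.inl rfl
  · rintro x y (rfl | ⟨h1, h2⟩)
    · exact Or.inl rfl
    · exact Or.inr ⟨h2, h1⟩
  · rintro x y zz (rfl | ⟨h1, h2⟩) h
    · exact h
    · rcases h with rfl | ⟨h3, h4⟩
      · exact Or.inr ⟨h1, h2⟩
      · exact Or.inr ⟨h1, h4⟩

attribute [irreducible] extractAt u1iter

theorem recIn_Fa {f : ℕ → ℕ} (hf : RecursiveInO O ↑f) :
    RecursiveInO O ↑(fun w => Nat.pair w (f (Nat.unpair w).2)) :=
  RecursiveInO.totPair (recIn_of_computable Computable.id)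
    (hf.totComp (recIn_of_computable (Primrec.snd.comp Primrec.unpair).to_comp))

def testa (z i v : ℕ) : ℕ :=
  if ¬(Nat.unpair (Nat.unpair v).1).2 = z ∧ (Nat.unpair (Nat.unpair v).2).1 = i ∧
      (Nat.unpair (Nat.unpair v).1).1 ≤ (Nat.unpair (Nat.unpair (Nat.unpair v).2).2).1
    then 0 else 1

def posta (v : ℕ) : ℕ :=
  extractAt (Nat.unpair (Nat.unpair v).1).1 (Nat.unpair (Nat.unpair (Nat.unpair v).2).2).1
    (Nat.unpair (Nat.unpair (Nat.unpair v).2).2).2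

def testb (z v : ℕ) : ℕ :=
  if ¬(Nat.unpair (Nat.unpair v).1).2 = z ∧
      (Nat.unpair (Nat.unpair v).1).1 ≤ (Nat.unpair (Nat.unpair v).2).1
    then 0 else 1

def postb (v : ℕ) : ℕ :=
  extractAt (Nat.unpair (Nat.unpair v).1).1 (Nat.unpair (Nat.unpair v).2).1
    ((Nat.unpair (u1iter (Nat.unpair (Nat.unpair (Nat.unpair v).2).2).1
      (Nat.unpair (Nat.unpair (Nat.unpair v).2).2).2)).2)

theorem primrec_testa (z i : ℕ) : Primrec (testa z i) := by
  unfold testa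
  have u1 : Primrec fun v : ℕ => (Nat.unpair v).1 := Primrec.fst.comp Primrec.unpair
  have u2 : Primrec fun v : ℕ => (Nat.unpair v).2 := Primrec.snd.comp Primrec.unpair
  apply Primrec.ite _ (Primrec.const 0) (Primrec.const 1)
  refine PrimrecPred.and (PrimrecPred.not ?_) (PrimrecPred.and ?_ ?_)
  · exact PrimrecRel.comp Primrec.eq (u2.comp u1) (Primrec.const z)
  · exact PrimrecRel.comp Primrec.eq (u1.comp u2) (Primrec.const i)
  · exact PrimrecRel.comp Primrec.nat_le (u1.comp u1) (u1.comp (u2.comp u2))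

theorem primrec_posta : Primrec posta := by
  unfold posta
  have u1 : Primrec fun v : ℕ => (Nat.unpair v).1 := Primrec.fst.comp Primrec.unpair
  have u2 : Primrec fun v : ℕ => (Nat.unpair v).2 := Primrec.snd.comp Primrec.unpair
  exact primrec_extractAt.comp <| Primrec.pair (u1.comp u1) <| Primrec.pair
    (u1.comp (u2.comp u2)) (u2.comp (u2.comp u2))

theorem primrec_testb (z : ℕ) : Primrec (testb z) := by
  unfold testb
  have u1 : Primrec fun v : ℕ => (Nat.unpair v).1 := Primrec.fst.comp Primrec.unpair
  have u2 : Primrec fun v : ℕ => (Nat.unpair v).2 := Primrec.snd.comp Primrec.unpair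
  apply Primrec.ite _ (Primrec.const 0) (Primrec.const 1)
  refine PrimrecPred.and (PrimrecPred.not ?_) ?_
  · exact PrimrecRel.comp Primrec.eq (u2.comp u1) (Primrec.const z)
  · exact PrimrecRel.comp Primrec.nat_le (u1.comp u1) (u1.comp u2)

theorem primrec_postb : Primrec postb := by
  have u1 : Primrec fun v : ℕ => (Nat.unpair v).1 := Primrec.fst.comp Primrec.unpair
  have u2 : Primrec fun v : ℕ => (Nat.unpair v).2 := Primrec.snd.comp Primrec.unpair
  have hC : Primrec fun v : ℕ => (Nat.unpair (u1iter
      (Nat.unpair (Nat.unpair (Nat.unpair v).2).2).1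
      (Nat.unpair (Nat.unpair (Nat.unpair v).2).2).2)).2 :=
    u2.comp (primrec_u1iter.comp (Primrec.pair
      (u1.comp (u2.comp u2)) (u2.comp (u2.comp u2))))
  unfold postb
  exact primrec_extractAt.comp <| Primrec.pair (u1.comp u1) <| Primrec.pair (u1.comp u2) hC

end Stmt6Main
section Stmt6Cases
variable {O : ℕ → ℕ}

theorem caseA {f : ℕ → ℕ} {G : ℕ → ℕ → ℕ} (hf : RecursiveInO O ↑f) (z i : ℕ)
    (hval : ∀ k, k ≠ z → f k ∈ VS G)
    (hA : ∀ m, ∃ k, ¬k = z ∧ (Nat.unpair (f k)).1 = i ∧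
      m ≤ (Nat.unpair (Nat.unpair (f k)).2).1) :
    RecursiveInO O ↑(G i) := by
  set Fa : ℕ → ℕ := fun w => Nat.pair w (f (Nat.unpair w).2) with hFadef
  have hFa : RecursiveInO O ↑Fa := recIn_Fa hf
  set t : ℕ → ℕ := fun w => testa z i (Fa w) with htdef
  have ht : RecursiveInO O ↑t := (recIn_of_computable (primrec_testa z i).to_comp).totComp hFa
  have hex : ∀ m, ∃ k, t (Nat.pair m k) = 0 := by
    intro m
    obtain ⟨k, h1, h2, h3⟩ := hA m
    refine ⟨k, ?_⟩
    simp [htdef, hFadef, testa, Nat.unpair_pair, h1, h2, h3]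
  have hs := RecursiveInO.search ht hex
  set alg : ℕ → ℕ := fun m => posta (Fa (Nat.pair m (Nat.find (hex m)))) with halgdef
  have halg : RecursiveInO O ↑alg :=
    (recIn_of_computable primrec_posta.to_comp).totComp (hFa.totComp
      (RecursiveInO.totPair (recIn_of_computable Computable.id) hs))
  have halg_eq : ∀ m, alg m = ghat G i m := by
    intro m
    have ht0 : t (Nat.pair m (Nat.find (hex m))) = 0 := Nat.find_spec (hex m)
    set k := Nat.find (hex m) with hk
    have hcond : ¬k = z ∧ (Nat.unpair (f k)).1 = i ∧
        m ≤ (Nat.unpair (Nat.unpair (f k)).2).1 := by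
      by_contra hC
      simp only [htdef, hFadef, testa, Nat.unpair_pair] at ht0
      rw [if_neg hC] at ht0
      exact one_ne_zero ht0
    obtain ⟨h1, h2, h3⟩ := hcond
    obtain ⟨i', n, hcert⟩ := hval k h1
    have hi' : i' = i := by
      rw [hcert] at h2; simpa [cert, Nat.unpair_pair] using h2
    subst hi'
    have hn : (Nat.unpair (Nat.unpair (f k)).2).1 = n := by
      rw [hcert]; simp [cert, Nat.unpair_pair]
    have hmn : m ≤ n := hn ▸ h3
    show posta (Fa (Nat.pair m k)) = ghat G i' m
    simp only [hFadef, Nat.unpair_pair]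
    rw [hcert]
    simp only [posta, cert, Nat.unpair_pair]
    exact extractAt_preSeq (ghat G i') hmn
  refine ((recIn_of_computable
    (Primrec.fst.comp Primrec.unpair).to_comp).totComp halg).of_eq' fun m => ?_
  show Part.some ((Nat.unpair (alg m)).1) = Part.some (G i m)
  rw [halg_eq m]
  simp [ghat, Nat.unpair_pair]

theorem caseB {f : ℕ → ℕ} {G : ℕ → ℕ → ℕ} (hf : RecursiveInO O ↑f) (z : ℕ)
    (hval : ∀ k, k ≠ z → f k ∈ VS G)
    (hB : ∀ m, ∃ k, ¬k = z ∧ m ≤ (Nat.unpair (f k)).1) :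
    RecursiveInO O ↑(G 0) := by
  set Fa : ℕ → ℕ := fun w => Nat.pair w (f (Nat.unpair w).2) with hFadef
  have hFa : RecursiveInO O ↑Fa := recIn_Fa hf
  set t : ℕ → ℕ := fun w => testb z (Fa w) with htdef
  have ht : RecursiveInO O ↑t := (recIn_of_computable (primrec_testb z).to_comp).totComp hFa
  have hex : ∀ m, ∃ k, t (Nat.pair m k) = 0 := by
    intro m
    obtain ⟨k, h1, h2⟩ := hB m
    refine ⟨k, ?_⟩
    simp [htdef, hFadef, testb, Nat.unpair_pair, h1, h2]
  have hs := RecursiveInO.search ht hex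
  set alg : ℕ → ℕ := fun m => postb (Fa (Nat.pair m (Nat.find (hex m)))) with halgdef
  have halg : RecursiveInO O ↑alg :=
    (recIn_of_computable primrec_postb.to_comp).totComp (hFa.totComp
      (RecursiveInO.totPair (recIn_of_computable Computable.id) hs))
  have halg_eq : ∀ m, alg m = G 0 m := by
    intro m
    have ht0 : t (Nat.pair m (Nat.find (hex m))) = 0 := Nat.find_spec (hex m)
    set k := Nat.find (hex m) with hk
    have hcond : ¬k = z ∧ m ≤ (Nat.unpair (f k)).1 := by
      by_contra hC
      simp only [htdef, hFadef, testb, Nat.unpair_pair] at ht0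
      rw [if_neg hC] at ht0
      exact one_ne_zero ht0
    obtain ⟨h1, h2⟩ := hcond
    obtain ⟨i', n, hcert⟩ := hval k h1
    have hmi : m ≤ i' := by
      rw [hcert] at h2; simpa [cert, Nat.unpair_pair] using h2
    have hu : u1iter n (preSeq (ghat G i') n) = ghat G i' 0 := by
      have h0 := u1iter_preSeq (ghat G i') 0 n
      rw [Nat.zero_add] at h0
      rw [h0]
      rfl
    show postb (Fa (Nat.pair m k)) = G 0 m
    simp only [hFadef, Nat.unpair_pair]
    rw [hcert]
    simp only [postb, cert, Nat.unpair_pair]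
    rw [hu]
    have : (Nat.unpair (ghat G i' 0)).2 = preSeq (G 0) i' := by
      simp [ghat, Nat.unpair_pair]
    rw [this]
    exact extractAt_preSeq (G 0) hmi
  refine halg.of_eq' fun m => ?_
  show Part.some (alg m) = Part.some (G 0 m)
  rw [halg_eq m]

end Stmt6Cases
/-- Every upward closed collection of Turing degrees with a
countable basis is realised as a reducibility spectrum. -/
theorem stmt_6 (B : Set TuringDegreeF) (hne : B.Nonempty) (hcnt : B.Countable)
    (hinc : ∀ b ∈ B, ∀ b' ∈ B, b ≠ b' → ¬b ≤ b' ∧ ¬b' ≤ b) :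
    ∃ R S : ℕ → ℕ → Prop, Equivalence R ∧ Equivalence S ∧
      SpecRed R S = {d | ∃ b ∈ B, b ≤ d} := by
  classical
  obtain ⟨φ, hφ⟩ := hcnt.exists_eq_range hne
  set G : ℕ → ℕ → ℕ := fun i => Quotient.out (φ i) with hGdef
  refine ⟨Eq, genRel {x | x ∉ VS G}, eq_equivalence, equivalence_genRel _, ?_⟩
  ext d
  induction d using Quotient.inductionOn with
  | h h =>
  simp only [SpecRed, Set.mem_setOf_eq, ReducibleIn]
  constructor
  · rintro ⟨f, hfc, hred⟩
    have hf : RecursiveInO h ↑f := hfc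
    have finj : Function.Injective f := fun x y hxy => (hred x y).2 (Or.inl hxy)
    have hbad : ∀ x y, f x ∉ VS G → f y ∉ VS G → x = y := fun x y hx hy =>
      (hred x y).2 (Or.inr ⟨hx, hy⟩)
    obtain ⟨z, hz⟩ : ∃ z, ∀ x, x ≠ z → f x ∈ VS G := by
      by_cases hexi : ∃ x, f x ∉ VS G
      · obtain ⟨x0, hx0⟩ := hexi
        exact ⟨x0, fun x hx => by_contra fun hxV => hx (hbad x x0 hxV hx0)⟩
      · push_neg at hexi
        exact ⟨0, fun x _ => hexi x⟩
    have hdi : (∃ i, ∀ m, ∃ k, ¬k = z ∧ (Nat.unpair (f k)).1 = i ∧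
          m ≤ (Nat.unpair (Nat.unpair (f k)).2).1)
        ∨ (∀ m, ∃ k, ¬k = z ∧ m ≤ (Nat.unpair (f k)).1) := by
      by_contra hC
      push_neg at hC
      obtain ⟨hA, hB⟩ := hC
      obtain ⟨m₀, hm₀⟩ := hB
      choose M hM using hA
      set MM : ℕ := (Finset.range m₀).sup M + 1 with hMM
      have hIb : ∀ k, ¬k = z → (Nat.unpair (f k)).1 < m₀ := fun k hk => hm₀ k hk
      have hNb : ∀ k, ¬k = z → (Nat.unpair (Nat.unpair (f k)).2).1 < MM := by
        intro k hk
        have h1 := hM ((Nat.unpair (f k)).1) k hk rfl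
        have h2 : M ((Nat.unpair (f k)).1) ≤ (Finset.range m₀).sup M :=
          Finset.le_sup (Finset.mem_range.2 (hIb k hk))
        omega
      have key : Set.InjOn
          (fun x => ((Nat.unpair (f x)).1, (Nat.unpair (Nat.unpair (f x)).2).1))
          {x | x ≠ z} := by
        intro x hx y hy hxy
        obtain ⟨ix, nx, hcx⟩ := hz x hx
        obtain ⟨iy, ny, hcy⟩ := hz y hy
        have hix : (Nat.unpair (f x)).1 = ix := by rw [hcx]; simp [cert, Nat.unpair_pair]
        have hnx : (Nat.unpair (Nat.unpair (f x)).2).1 = nx := by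
          rw [hcx]; simp [cert, Nat.unpair_pair]
        have hiy : (Nat.unpair (f y)).1 = iy := by rw [hcy]; simp [cert, Nat.unpair_pair]
        have hny : (Nat.unpair (Nat.unpair (f y)).2).1 = ny := by
          rw [hcy]; simp [cert, Nat.unpair_pair]
        simp only [hix, hnx, hiy, hny, Prod.mk.injEq] at hxy
        apply finj
        rw [hcx, hcy, hxy.1, hxy.2]
      have hsub : (fun x => ((Nat.unpair (f x)).1, (Nat.unpair (Nat.unpair (f x)).2).1)) ''
          {x | x ≠ z} ⊆ Set.Iio m₀ ×ˢ Set.Iio MM := by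
        rintro p ⟨x, hx, rfl⟩
        exact ⟨hIb x hx, hNb x hx⟩
      have hfin : Set.Finite {x : ℕ | x ≠ z} :=
        Set.Finite.of_finite_image
          (Set.Finite.subset ((Set.finite_Iio m₀).prod (Set.finite_Iio MM)) hsub) key
      have huniv : Set.Finite (Set.univ : Set ℕ) := by
        apply Set.Finite.subset (hfin.union (Set.finite_singleton z))
        intro x _
        by_cases hxz : x = z
        · exact Or.inr (by simp [hxz])
        · exact Or.inl hxz
      exact Set.infinite_univ huniv
    have conc : ∀ i : ℕ, TuringReducibleF (G i) h → ∃ b ∈ B, b ≤ Quotient.mk turingSetoid h := by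
      intro i hgi
      refine ⟨φ i, by rw [hφ]; exact Set.mem_range_self i, ?_⟩
      rw [← Quotient.out_eq (φ i)]
      exact hgi
    rcases hdi with ⟨i, hA⟩ | hB
    · exact conc i (caseA hf z i hz hA)
    · exact conc 0 (caseB hf z hz hB)
  · rintro ⟨b, hbB, hbd⟩
    rw [hφ] at hbB
    obtain ⟨i, rfl⟩ := hbB
    have hgi : TuringReducibleF (G i) h := by
      rw [← Quotient.out_eq (φ i)] at hbd
      exact hbd
    have hghat : RecursiveInO h ↑(ghat G i) := by
      refine (RecursiveInO.totPair hgi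
        (recIn_of_computable (Computable.const (preSeq (G 0) i)))).of_eq' fun n => rfl
    have hpre : RecursiveInO h ↑(preSeq (ghat G i)) := hghat.preSeq'
    refine ⟨fun x => cert G i x, ?_, ?_⟩
    · show RecursiveInO h ↑(fun x => cert G i x)
      refine (RecursiveInO.totPair (recIn_of_computable (Computable.const i))
        (RecursiveInO.totPair (recIn_of_computable Computable.id) hpre)).of_eq' fun n => rfl
    · intro x y
      constructor
      · rintro rfl
        exact Or.inl rfl
      · rintro (hxy | ⟨hx, hy⟩)
        · have h2 := (Nat.pair_eq_pair.1 hxy).2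
          exact (Nat.pair_eq_pair.1 h2).1
        · exact absurd ⟨i, x, rfl⟩ hx
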